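/- Let G be an abelian group and S a finite generating subset with 0 ∈ S and S ≠ G. Let H be a nonzero subgroup of G which is a 1-fragment of S, and let K be a subgroup of G/H which is a 1-fragment of φ_H(S). Then φ_H^{−1}(K) is a 2-fragment of S. -/

import Mathlib

open Pointwise

variable {G : Type*} [AddCommGroup G]

/-- The boundary of `X` with respect to `S`: `∂(X) = (X + S) \ X`. -/
def bdry (S X : Set G) : Set G := (X + S) \ X

/-- The co-image of `X` with respect to `S`: `∇(X) = G \ (X + S)`. -/
def coimg (S X : Set G) : Set G := (X + S)ᶜ

/-- `S` is `k`-separable: some finite `X` has `|X| ≥ k` and `|∇(X)| ≥ k`. -/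
def IsSep (S : Set G) (k : ℕ) : Prop :=
  ∃ X : Set G, X.Finite ∧ k ≤ X.encard ∧ k ≤ (coimg S X).encard

/-- The `k`-th connectivity `κ_k(S) = min {|∂(X)| : X finite, |X| ≥ k, |∇(X)| ≥ k}`. -/
noncomputable def kappa (S : Set G) (k : ℕ) : ℕ∞ :=
  ⨅ X ∈ {X : Set G | X.Finite ∧ k ≤ X.encard ∧ k ≤ (coimg S X).encard}, (bdry S X).encard

/-- `X` is a `k`-fragment of `S`. -/
def IsFragment (S X : Set G) (k : ℕ) : Prop :=
  X.Finite ∧ k ≤ X.encard ∧ k ≤ (coimg S X).encard ∧ (bdry S X).encard = kappa S k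

/-- `X` is a `k`-atom of `S`: a `k`-fragment of minimum cardinality. -/
def IsAtomK (S X : Set G) (k : ℕ) : Prop :=
  IsFragment S X k ∧ ∀ Y : Set G, IsFragment S Y k → X.encard ≤ Y.encard


lemma enat_card_prod (α β : Type*) : ENat.card (α × β) = ENat.card α * ENat.card β := by
  simp only [ENat.card, Cardinal.mk_prod, map_mul, Cardinal.toENat_lift]

lemma encard_preimage_mk (H : AddSubgroup G) (T : Set (G ⧸ H)) :
    ((QuotientAddGroup.mk : G → G ⧸ H) ⁻¹' T).encard = (H : Set G).encard * T.encard := by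
  rw [Set.encard, Set.encard, Set.encard,
    ENat.card_congr (QuotientAddGroup.preimageMkEquivAddSubgroupProdSet H T), enat_card_prod]
  rfl

lemma preimage_add_set (H : AddSubgroup G) (A : Set (G ⧸ H)) (S : Set G) :
    (QuotientAddGroup.mk : G → G ⧸ H) ⁻¹' A + S
      = (QuotientAddGroup.mk : G → G ⧸ H) ⁻¹' (A + (QuotientAddGroup.mk : G → G ⧸ H) '' S) := by
  ext x
  constructor
  · rintro ⟨a, ha, s, hs, rfl⟩
    exact ⟨_, ha, _, ⟨s, hs, rfl⟩, rfl⟩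
  · rintro ⟨a, ha, -, ⟨s, hs, rfl⟩, hsum⟩
    refine ⟨x - s, ?_, s, hs, sub_add_cancel x s⟩
    show QuotientAddGroup.mk (x - s) ∈ A
    have : QuotientAddGroup.mk (x - s) = a := by
      rw [QuotientAddGroup.mk_sub, ← hsum, add_sub_cancel_right]
    rwa [this]

/-- If a nonzero subgroup `H` is a `1`-fragment of `S` and a subgroup
`K` of `G/H` is a `1`-fragment of `φ_H(S)`, then `φ_H⁻¹(K)` is a `2`-fragment of `S`. -/
theorem stmt_10 (S : Set G) (hfin : S.Finite) (h0 : (0 : G) ∈ S)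
    (hgen : AddSubgroup.closure S = ⊤) (hne : S ≠ Set.univ)
    (H : AddSubgroup G) (hH0 : H ≠ ⊥) (hH : IsFragment S (H : Set G) 1)
    (K : AddSubgroup (G ⧸ H))
    (hK : IsFragment ((QuotientAddGroup.mk : G → G ⧸ H) '' S) (K : Set (G ⧸ H)) 1) :
    IsFragment S ((QuotientAddGroup.mk : G → G ⧸ H) ⁻¹' (K : Set (G ⧸ H))) 2 := by
  classical
  set φ : G → G ⧸ H := QuotientAddGroup.mk with hφ
  obtain ⟨hHfin, -, hHco, hHk⟩ := hH
  obtain ⟨hKfin, hK1, hKco, hKk⟩ := hK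
  set φS : Set (G ⧸ H) := φ '' S with hφS
  set X : Set G := φ ⁻¹' (K : Set (G ⧸ H)) with hX
  -- |H| ≥ 2
  have hHcard : 2 ≤ (H : Set G).encard := by
    obtain ⟨x, hx, hx0⟩ : ∃ x ∈ H, x ≠ 0 := by
      by_contra hcon
      push_neg at hcon
      exact hH0 ((AddSubgroup.eq_bot_iff_forall H).2 hcon)
    have hsub : ({0, x} : Set G) ⊆ (H : Set G) := by
      intro y hy
      rcases hy with rfl | rfl
      · exact H.zero_mem
      · exact hx
    have := Set.encard_le_encard hsub
    rwa [Set.encard_pair (Ne.symm hx0)] at this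
  -- preimage of {0} is H
  have hpreH : φ ⁻¹' ({0} : Set (G ⧸ H)) = (H : Set G) := by
    ext y; simp [hφ, QuotientAddGroup.eq_zero_iff]
  -- H + S = φ⁻¹ φS
  have hHS : (H : Set G) + S = φ ⁻¹' φS := by
    rw [← hpreH, preimage_add_set]
    congr 1
    simp [Set.singleton_add]
    rfl
  -- X + S = φ⁻¹ (K + φS)
  have hXS : X + S = φ ⁻¹' ((K : Set (G ⧸ H)) + φS) := preimage_add_set H _ S
  have hbdryX : bdry S X = φ ⁻¹' (bdry φS (K : Set (G ⧸ H))) := by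
    rw [bdry, bdry, hXS, ← Set.preimage_diff]
  have hcoX : coimg S X = φ ⁻¹' (coimg φS (K : Set (G ⧸ H))) := by
    rw [coimg, coimg, hXS, ← Set.preimage_compl]
  have hbdryH : bdry S (H : Set G) = φ ⁻¹' (φS \ {0}) := by
    rw [bdry, hHS, ← hpreH, ← Set.preimage_diff]
  -- cardinalities
  have cbX : (bdry S X).encard = (H : Set G).encard * (bdry φS (K : Set (G ⧸ H))).encard := by
    rw [hbdryX]; exact encard_preimage_mk H _
  have ccX : (coimg S X).encard = (H : Set G).encard * (coimg φS (K : Set (G ⧸ H))).encard := by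
    rw [hcoX]; exact encard_preimage_mk H _
  have cX : X.encard = (H : Set G).encard * (K : Set (G ⧸ H)).encard := encard_preimage_mk H _
  have cbH : (bdry S (H : Set G)).encard = (H : Set G).encard * (φS \ {0}).encard := by
    rw [hbdryH]; exact encard_preimage_mk H _
  have hHtop : (H : Set G).encard ≠ ⊤ := hHfin.encard_lt_top.ne
  -- X is finite
  have hXfin : X.Finite := by
    rw [← Set.encard_lt_top_iff, cX, lt_top_iff_ne_top]
    exact WithTop.mul_ne_top hHtop hKfin.encard_lt_top.ne
  -- 2 ≤ |X|
  have hX2 : (2 : ℕ) ≤ X.encard := by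
    rw [cX]
    calc ((2 : ℕ) : ℕ∞) = 2 * 1 := by norm_num
    _ ≤ (H : Set G).encard * (K : Set (G ⧸ H)).encard := by
        exact mul_le_mul' hHcard (by exact_mod_cast hK1)
  -- 2 ≤ |coimg X|
  have hXco2 : (2 : ℕ) ≤ (coimg S X).encard := by
    rw [ccX]
    calc ((2 : ℕ) : ℕ∞) = 2 * 1 := by norm_num
    _ ≤ _ := mul_le_mul' hHcard (by exact_mod_cast hKco)
  -- kappa S 2 ≤ |bdry X|
  have h1 : kappa S 2 ≤ (bdry S X).encard :=
    iInf₂_le X ⟨hXfin, hX2, hXco2⟩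
  -- {0} is a 1-candidate in G ⧸ H
  have hconn : (φS)ᶜ.Nonempty := by
    have h1le : 1 ≤ (coimg S (H : Set G)).encard := by exact_mod_cast hHco
    obtain ⟨y, hy⟩ := Set.one_le_encard_iff_nonempty.1 h1le
    rw [coimg, hHS, ← Set.preimage_compl] at hy
    exact ⟨φ y, hy⟩
  have hb0 : bdry φS ({0} : Set (G ⧸ H)) = φS \ {0} := by
    rw [bdry]
    congr 1
    simp [Set.singleton_add]
  have hc0 : (1 : ℕ) ≤ (coimg φS ({0} : Set (G ⧸ H))).encard := by
    rw [coimg]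
    have : ({0} : Set (G ⧸ H)) + φS = φS := by simp [Set.singleton_add]
    rw [this]
    exact_mod_cast Set.one_le_encard_iff_nonempty.2 hconn
  have hκ0 : kappa φS 1 ≤ (φS \ {0}).encard := by
    rw [← hb0]
    exact iInf₂_le ({0} : Set (G ⧸ H))
      ⟨Set.finite_singleton 0, by simp, hc0⟩
  -- chain
  have h2 : (bdry S X).encard ≤ kappa S 1 := by
    rw [cbX, hKk, ← hHk, cbH]
    exact mul_le_mul' le_rfl hκ0
  have h3 : kappa S 1 ≤ kappa S 2 := by
    refine le_iInf₂ fun Y hY => ?_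
    obtain ⟨hYf, hY2, hYc2⟩ := hY
    refine iInf₂_le Y ⟨hYf, ?_, ?_⟩
    · exact le_trans (by norm_num) hY2
    · exact le_trans (by norm_num) hYc2
  exact ⟨hXfin, hX2, hXco2, le_antisymm (h2.trans h3) h1⟩
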